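/- arXiv:1702.00870 — 3 statements merged into one kernel-verified Lean document; each statement's English description precedes it below -/
import Mathlib

section
/- Let a, b > 0 and let f(t) = 2·a·t·cos(b·t) on the interval [0, π/(2b)]. Then f attains its maximum on [0, π/(2b)] at the unique point t̄ = τ/b, where τ is the unique root of τ·tan(τ) = 1 in (0, π/2), and the maximum value equals (2a/b)·τ·cos(τ). -/
/-- For `a, b > 0`, the rectangle-energy function `f t = 2·a·t·cos (b·t)` attains its
maximum on `[0, π/(2b)]` at the unique point `t̄ = τ/b`, where `τ` is the unique root
of `τ·tan τ = 1` in `(0, π/2)`, and the maximum value is `(2a/b)·τ·cos τ`. -/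
theorem stmt_2 (a b τ : ℝ) (ha : 0 < a) (hb : 0 < b)
    (hτ : τ ∈ Set.Ioo 0 (Real.pi / 2)) (hroot : τ * Real.tan τ = 1) :
    IsMaxOn (fun t : ℝ => 2 * a * t * Real.cos (b * t))
      (Set.Icc 0 (Real.pi / (2 * b))) (τ / b) ∧
    (∀ t : ℝ, t ∈ Set.Icc 0 (Real.pi / (2 * b)) →
      IsMaxOn (fun s : ℝ => 2 * a * s * Real.cos (b * s))
        (Set.Icc 0 (Real.pi / (2 * b))) t → t = τ / b) ∧
    2 * a * (τ / b) * Real.cos (b * (τ / b)) = (2 * a / b) * τ * Real.cos τ := by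
  obtain ⟨hτ0, hτπ⟩ := hτ
  have hπ := Real.pi_pos
  have hcosτ : 0 < Real.cos τ := Real.cos_pos_of_mem_Ioo ⟨by linarith, hτπ⟩
  have hsinτ : 0 < Real.sin τ := Real.sin_pos_of_pos_of_lt_pi hτ0 (by linarith)
  have hsc : τ * Real.sin τ = Real.cos τ := by
    rw [Real.tan_eq_sin_div_cos] at hroot
    field_simp at hroot; linarith
  have hderiv : ∀ s : ℝ, HasDerivAt (fun x : ℝ => x * Real.cos x)
      (Real.cos s - s * Real.sin s) s := by
    intro s
    have h := (hasDerivAt_id s).mul (Real.hasDerivAt_cos s)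
    simp only [id_eq, one_mul] at h
    exact h.congr_deriv (by ring)
  have hcont : ContinuousOn (fun x : ℝ => x * Real.cos x) Set.univ :=
    (continuous_id.mul Real.continuous_cos).continuousOn
  have hmono : StrictMonoOn (fun s : ℝ => s * Real.cos s) (Set.Icc 0 τ) := by
    apply strictMonoOn_of_deriv_pos (convex_Icc _ _) (hcont.mono (Set.subset_univ _))
    intro s hs
    rw [interior_Icc] at hs
    obtain ⟨hs0, hsτ⟩ := hs
    rw [(hderiv s).deriv]
    have h1 : Real.sin s ≤ Real.sin τ := by
      apply Real.sin_le_sin_of_le_of_le_pi_div_two (by linarith) (le_of_lt hτπ) (le_of_lt hsτ)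
    have h2 : Real.cos τ < Real.cos s := by
      apply Real.cos_lt_cos_of_nonneg_of_le_pi (le_of_lt hs0) (by linarith) hsτ
    nlinarith
  have hanti : StrictAntiOn (fun s : ℝ => s * Real.cos s) (Set.Icc τ (Real.pi / 2)) := by
    apply strictAntiOn_of_deriv_neg (convex_Icc _ _) (hcont.mono (Set.subset_univ _))
    intro s hs
    rw [interior_Icc] at hs
    obtain ⟨hsτ, hsπ⟩ := hs
    rw [(hderiv s).deriv]
    have h1 : Real.sin τ < Real.sin s := by
      apply Real.sin_lt_sin_of_lt_of_le_pi_div_two (by linarith) (le_of_lt hsπ) hsτ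
    have h2 : Real.cos s < Real.cos τ := by
      apply Real.cos_lt_cos_of_nonneg_of_le_pi (le_of_lt hτ0) (by linarith) hsτ
    nlinarith
  have hkey : ∀ s ∈ Set.Icc (0:ℝ) (Real.pi / 2), s ≠ τ →
      s * Real.cos s < τ * Real.cos τ := by
    intro s hs hne
    obtain ⟨hs0, hsπ⟩ := hs
    rcases lt_or_gt_of_ne hne with h | h
    · exact hmono ⟨hs0, le_of_lt h⟩ ⟨hs0.trans (le_of_lt h), le_refl τ⟩ h
    · exact hanti ⟨le_refl τ, by linarith⟩ ⟨le_of_lt h, hsπ⟩ h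
  have hle : ∀ s ∈ Set.Icc (0:ℝ) (Real.pi / 2), s * Real.cos s ≤ τ * Real.cos τ := by
    intro s hs
    by_cases hne : s = τ
    · rw [hne]
    · exact le_of_lt (hkey s hs hne)
  have hbτ : b * (τ / b) = τ := mul_div_cancel₀ τ (ne_of_gt hb)
  have hmem : ∀ t : ℝ, t ∈ Set.Icc 0 (Real.pi / (2 * b)) →
      b * t ∈ Set.Icc (0:ℝ) (Real.pi / 2) := by
    intro t ⟨ht0, ht1⟩
    constructor
    · positivity
    · have h1 : b * t ≤ b * (Real.pi / (2 * b)) :=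
        mul_le_mul_of_nonneg_left ht1 (le_of_lt hb)
      have h2 : b * (Real.pi / (2 * b)) = Real.pi / 2 := by field_simp
      linarith
  have hmax : IsMaxOn (fun t : ℝ => 2 * a * t * Real.cos (b * t))
      (Set.Icc 0 (Real.pi / (2 * b))) (τ / b) := by
    rw [isMaxOn_iff]
    intro t ht
    have h := hle (b * t) (hmem t ht)
    simp only [hbτ]
    have hab : 0 < 2 * a / b := by positivity
    have : 2 * a / b * (b * t * Real.cos (b * t)) ≤ 2 * a / b * (τ * Real.cos τ) :=
      mul_le_mul_of_nonneg_left h (le_of_lt hab)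
    calc 2 * a * t * Real.cos (b * t) = 2 * a / b * (b * t * Real.cos (b * t)) := by
          field_simp
      _ ≤ 2 * a / b * (τ * Real.cos τ) := this
      _ = 2 * a * (τ / b) * Real.cos τ := by field_simp
  refine ⟨hmax, ?_, ?_⟩
  · intro t ht hmaxt
    by_contra hne
    have hbt : b * t ≠ τ := by
      intro h; apply hne; field_simp [← h]; linarith [mul_comm t b]
    have hlt := hkey (b * t) (hmem t ht) hbt
    have hτb : τ / b ∈ Set.Icc 0 (Real.pi / (2 * b)) := by
      constructor
      · positivity
      · rw [show Real.pi / (2 * b) = (Real.pi / 2) / b by ring]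
        gcongr
    have h1 := hmaxt hτb
    simp only [Set.mem_setOf_eq, hbτ] at h1
    have hab : 0 < 2 * a / b := by positivity
    have h2 : 2 * a / b * (b * t * Real.cos (b * t)) < 2 * a / b * (τ * Real.cos τ) :=
      mul_lt_mul_of_pos_left hlt hab
    have e1 : 2 * a * t * Real.cos (b * t) = 2 * a / b * (b * t * Real.cos (b * t)) := by
      field_simp
    have e2 : 2 * a * (τ / b) * Real.cos τ = 2 * a / b * (τ * Real.cos τ) := by
      field_simp
    linarith [h1, h2]
  · rw [hbτ]; field_simp
end

section
/- With g = arccos, the quantity 0.2727·(g(0.2727) − g(0.5758) + g(0.2727 + 0.5758)) + 0.5758·g(0.5758) is strictly greater than 0.79. (Thus the two-load configuration with normalized sizes y₁ = 0.2727 and y₂ = 0.5758 achieves solar utilization above 79% on the normalized clear-sky cosine day.) -/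
lemma cos_dbl_lb {x l : ℝ} (h0 : 0 ≤ l) (h : l ≤ Real.cos x) :
    2 * l ^ 2 - 1 ≤ Real.cos (2 * x) := by
  rw [Real.cos_two_mul]
  nlinarith

lemma cos_oct_lb {x l0 : ℝ} (h0 : 0 ≤ l0) (h1 : 0 ≤ 2*l0^2-1)
    (h2 : 0 ≤ 2*(2*l0^2-1)^2-1) (hb : l0 ≤ Real.cos x) :
    2*(2*(2*l0^2-1)^2-1)^2-1 ≤ Real.cos (8*x) := by
  have a1 := cos_dbl_lb h0 hb
  have a2 := cos_dbl_lb h1 a1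
  have a3 := cos_dbl_lb h2 a2
  have : (2:ℝ) * (2 * x) * 2 = 8 * x := by ring
  rw [show (8:ℝ)*x = 2*(2*(2*x)) by ring]
  exact a3

lemma arccos_gt {q a : ℝ} (hq1 : -1 ≤ q) (hq2 : q ≤ 1) (ha0 : 0 ≤ a) (ha : a ≤ Real.pi)
    (h : q < Real.cos a) : a < Real.arccos q := by
  by_contra hc
  push_neg at hc
  have hmem1 : Real.arccos q ∈ Set.Icc 0 Real.pi :=
    ⟨Real.arccos_nonneg q, Real.arccos_le_pi q⟩
  have hmem2 : a ∈ Set.Icc 0 Real.pi := ⟨ha0, ha⟩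
  have h2 : Real.cos a ≤ Real.cos (Real.arccos q) :=
    (Real.strictAntiOn_cos.le_iff_ge hmem2 hmem1).2 hc
  rw [Real.cos_arccos hq1 hq2] at h2
  linarith

lemma arccos_bound (q a : ℝ) (hq1 : -1 ≤ q) (hq2 : q ≤ 1) (ha0 : 0 ≤ a)
    (ha : a ≤ Real.pi)
    (h : q < 2*(2*(2*(1-(a/8)^2/2)^2-1)^2-1)^2-1)
    (h0 : 0 ≤ 1-(a/8)^2/2) (h1 : 0 ≤ 2*(1-(a/8)^2/2)^2-1)
    (h2 : 0 ≤ 2*(2*(1-(a/8)^2/2)^2-1)^2-1) :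
    a < Real.arccos q := by
  apply arccos_gt hq1 hq2 ha0 ha
  have hb : (1 - (a/8)^2/2 : ℝ) ≤ Real.cos (a/8) := Real.one_sub_sq_div_two_le_cos
  have hoct := cos_oct_lb h0 h1 h2 hb
  rw [show (8:ℝ) * (a/8) = a by ring] at hoct
  linarith

/-- The two-load configuration with normalized sizes `y₁ = 0.2727` and `y₂ = 0.5758`
achieves solar utilization above `0.79` on the normalized clear-sky cosine day. -/
theorem stmt_8 :
    (0.79 : ℝ) <
      0.2727 * (Real.arccos 0.2727 - Real.arccos 0.5758 +
        Real.arccos (0.2727 + 0.5758)) + 0.5758 * Real.arccos 0.5758 := by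
  have hpi : (3:ℝ) < Real.pi := Real.pi_gt_three
  have hA : (1.29:ℝ) < Real.arccos 0.2727 := by
    apply arccos_bound <;> norm_num <;> linarith
  have hB : (0.955:ℝ) < Real.arccos 0.5758 := by
    apply arccos_bound <;> norm_num <;> linarith
  have hC : (0.556:ℝ) < Real.arccos (0.2727 + 0.5758) := by
    norm_num
    apply arccos_bound <;> norm_num <;> linarith
  linarith
end

section
/- With g = arccos, the two-load utilization value 0.2727·(g(0.2727) − g(0.5758) + g(0.2727 + 0.5758)) + 0.5758·g(0.5758) strictly exceeds the supremum over y ∈ [0, 1] of y·arccos(y). (Thus on a normalized clear-sky cosine day, an optimally sized pair of on/off loads strictly outperforms the best possible single on/off load in solar utilization.) -/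
open Real

private lemma sin_ub {u : ℝ} (h0 : 0 ≤ u) (h1 : u ≤ 1) :
    Real.sin u ≤ u - u ^ 3 / 6 + u ^ 4 * (5 / 96) := by
  have hb := Real.sin_bound (x := u) (by rw [abs_of_nonneg h0]; exact h1)
  rw [abs_of_nonneg h0] at hb
  have := abs_le.mp hb
  nlinarith [this.2, mul_le_mul_of_nonneg_left h1 (pow_nonneg h0 4)]

private lemma sin_lb {u : ℝ} (h0 : 0 ≤ u) (h1 : u ≤ 1) :
    u - u ^ 3 / 6 - u ^ 4 * (5 / 96) ≤ Real.sin u := by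
  have hb := Real.sin_bound (x := u) (by rw [abs_of_nonneg h0]; exact h1)
  rw [abs_of_nonneg h0] at hb
  have := abs_le.mp hb
  nlinarith [this.1, mul_le_mul_of_nonneg_left h1 (pow_nonneg h0 4)]

/-- cos (4u) in terms of sin u : cos (4u) = 2*(1 - 2 sin u ^2)^2 - 1 -/
private lemma cos_four (u : ℝ) :
    Real.cos (4 * u) = 2 * (1 - 2 * Real.sin u ^ 2) ^ 2 - 1 := by
  have h1 : (4 : ℝ) * u = 2 * (2 * u) := by ring
  rw [h1, Real.cos_two_mul, Real.cos_two_mul']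
  have := Real.sin_sq_add_cos_sq u
  nlinarith [this]

private lemma aux_bounds {u : ℝ} (h0 : 0 ≤ u) (h1 : u ≤ 1 / 2) :
    0 ≤ u - u ^ 3 / 6 - u ^ 4 * (5 / 96) ∧
      u - u ^ 3 / 6 + u ^ 4 * (5 / 96) ≤ 17 / 32 := by
  have hu2 : u ^ 2 ≤ 1 / 4 := by nlinarith
  have h3 : u ^ 3 ≤ u / 4 := by nlinarith
  have h4 : u ^ 4 ≤ 1 / 16 := by nlinarith [sq_nonneg (u ^ 2)]
  have h4' : u ^ 4 ≤ u / 8 := by nlinarith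
  have h3' : 0 ≤ u ^ 3 := by positivity
  constructor <;> nlinarith

private lemma cos_four_ub {u : ℝ} (h0 : 0 ≤ u) (h1 : u ≤ 1 / 2) :
    Real.cos (4 * u) ≤ 2 * (1 - 2 * (u - u ^ 3 / 6 - u ^ 4 * (5 / 96)) ^ 2) ^ 2 - 1 := by
  have hs1 := sin_lb h0 (by linarith)
  have hs2 := sin_ub h0 (by linarith)
  obtain ⟨hq0, hp⟩ := aux_bounds h0 h1
  set q := u - u ^ 3 / 6 - u ^ 4 * (5 / 96) with hq
  have hsub : Real.sin u ≤ 17 / 32 := le_trans hs2 hp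
  have hq2 : q ^ 2 ≤ Real.sin u ^ 2 := by nlinarith
  have hpos : (0 : ℝ) < 1 - 2 * Real.sin u ^ 2 := by nlinarith
  have hpos2 : 1 - 2 * Real.sin u ^ 2 ≤ 1 - 2 * q ^ 2 := by nlinarith
  rw [cos_four u]
  nlinarith

private lemma cos_four_lb {u : ℝ} (h0 : 0 ≤ u) (h1 : u ≤ 1 / 2) :
    2 * (1 - 2 * (u - u ^ 3 / 6 + u ^ 4 * (5 / 96)) ^ 2) ^ 2 - 1 ≤ Real.cos (4 * u) := by
  have hs1 := sin_lb h0 (by linarith)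
  have hs2 := sin_ub h0 (by linarith)
  obtain ⟨hq0, hp⟩ := aux_bounds h0 h1
  set p := u - u ^ 3 / 6 + u ^ 4 * (5 / 96) with hpdef
  clear_value p
  have hs0 : 0 ≤ Real.sin u := by nlinarith
  have hp2 : Real.sin u ^ 2 ≤ p ^ 2 := by nlinarith
  have hpnn : 0 ≤ p := le_trans hs0 hs2
  have hpos : (0 : ℝ) < 1 - 2 * p ^ 2 := by
    nlinarith [mul_le_mul hp hp hpnn (by norm_num : (0:ℝ) ≤ 17 / 32)]
  have hpos2 : 1 - 2 * p ^ 2 ≤ 1 - 2 * Real.sin u ^ 2 := by nlinarith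
  rw [cos_four u]
  nlinarith

private lemma arccos_lt_of_cos_lt {x t : ℝ} (hx0 : -1 ≤ x) (hx1 : x ≤ 1)
    (ht0 : 0 ≤ t) (htpi : t ≤ Real.pi) (h : Real.cos t < x) : Real.arccos x < t := by
  by_contra h'
  push_neg at h'
  have := Real.cos_le_cos_of_nonneg_of_le_pi ht0 (Real.arccos_le_pi x) h'
  rw [Real.cos_arccos hx0 hx1] at this
  linarith

private lemma lt_arccos_of_lt_cos {x t : ℝ} (hx0 : -1 ≤ x) (hx1 : x ≤ 1)
    (htpi : t ≤ Real.pi) (h : x < Real.cos t) : t < Real.arccos x := by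
  by_contra h'
  push_neg at h'
  have := Real.cos_le_cos_of_nonneg_of_le_pi (Real.arccos_nonneg x) htpi h'
  rw [Real.cos_arccos hx0 hx1] at this
  linarith

private lemma arccos_anti {a y : ℝ} (ha : -1 ≤ a) (hy : y ≤ 1) (h : a ≤ y) :
    Real.arccos y ≤ Real.arccos a :=
  Real.strictAntiOn_arccos.antitoneOn ⟨ha, le_trans h hy⟩ ⟨le_trans ha h, hy⟩ h

/-- The two-load utilization with sizes `0.2727` and `0.5758` strictly exceeds the
best single-load utilization `sup_{y ∈ [0,1]} y · arccos y`. -/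
theorem stmt_9 :
    sSup ((fun y : ℝ => y * Real.arccos y) '' Set.Icc (0 : ℝ) 1) <
      0.2727 * (Real.arccos 0.2727 - Real.arccos 0.5758 +
        Real.arccos (0.2727 + 0.5758)) + 0.5758 * Real.arccos 0.5758 := by
  have hpi3 : (3 : ℝ) < Real.pi := Real.pi_gt_three
  have hpi4 : Real.pi < 3.15 := Real.pi_lt_d2
  -- Upper bounds on cos at the split points (for upper bounds on arccos)
  have hc127 : Real.cos 1.27 < 0.3 := by
    have h := cos_four_ub (u := 0.3175) (by norm_num) (by norm_num)
    norm_num at h ⊢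
    linarith
  have hc105 : Real.cos 1.05 < 0.5 := by
    have h := cos_four_ub (u := 0.2625) (by norm_num) (by norm_num)
    norm_num at h ⊢
    linarith
  have hc087 : Real.cos 0.87 < 0.65 := by
    have h := cos_four_ub (u := 0.2175) (by norm_num) (by norm_num)
    norm_num at h ⊢
    linarith
  have hc065 : Real.cos 0.65 < 0.8 := by
    have h := cos_four_ub (u := 0.1625) (by norm_num) (by norm_num)
    norm_num at h ⊢
    linarith
  -- Lower bounds on cos (for lower bounds on arccos of the specific values)
  have hc129 : (0.2727 : ℝ) < Real.cos 1.29 := by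
    have h := cos_four_lb (u := 0.3225) (by norm_num) (by norm_num)
    norm_num at h ⊢
    linarith
  have hc095 : (0.5758 : ℝ) < Real.cos 0.95 := by
    have h := cos_four_lb (u := 0.2375) (by norm_num) (by norm_num)
    norm_num at h ⊢
    linarith
  have hc055 : (0.8485 : ℝ) < Real.cos 0.55 := by
    have h := cos_four_lb (u := 0.1375) (by norm_num) (by norm_num)
    norm_num at h ⊢
    linarith
  -- arccos upper bounds
  have hA3 : Real.arccos 0.3 < 1.27 :=
    arccos_lt_of_cos_lt (by norm_num) (by norm_num) (by norm_num) (by linarith) hc127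
  have hA5 : Real.arccos 0.5 < 1.05 :=
    arccos_lt_of_cos_lt (by norm_num) (by norm_num) (by norm_num) (by linarith) hc105
  have hA65 : Real.arccos 0.65 < 0.87 :=
    arccos_lt_of_cos_lt (by norm_num) (by norm_num) (by norm_num) (by linarith) hc087
  have hA8 : Real.arccos 0.8 < 0.65 :=
    arccos_lt_of_cos_lt (by norm_num) (by norm_num) (by norm_num) (by linarith) hc065
  -- arccos lower bounds
  have hB1 : (1.29 : ℝ) < Real.arccos 0.2727 :=
    lt_arccos_of_lt_cos (by norm_num) (by norm_num) (by linarith) hc129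
  have hB2 : (0.95 : ℝ) < Real.arccos 0.5758 :=
    lt_arccos_of_lt_cos (by norm_num) (by norm_num) (by linarith) hc095
  have hB3 : (0.55 : ℝ) < Real.arccos (0.2727 + 0.5758) := by
    have : (0.2727 : ℝ) + 0.5758 = 0.8485 := by norm_num
    rw [this]
    exact lt_arccos_of_lt_cos (by norm_num) (by norm_num) (by linarith) hc055
  -- sup bound
  have hsup : sSup ((fun y : ℝ => y * Real.arccos y) '' Set.Icc (0 : ℝ) 1) ≤ 0.7 := by
    apply Real.sSup_le _ (by norm_num)
    rintro x ⟨y, ⟨hy0, hy1⟩, rfl⟩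
    simp only
    have hnn := Real.arccos_nonneg y
    rcases le_or_gt y 0.3 with h | h
    · have : Real.arccos y ≤ Real.pi / 2 := Real.arccos_le_pi_div_two.mpr hy0
      calc y * Real.arccos y ≤ 0.3 * (Real.pi / 2) := by
            apply mul_le_mul h this hnn (by positivity)
        _ ≤ 0.7 := by nlinarith
    rcases le_or_gt y 0.5 with h2 | h2
    · have ha : Real.arccos y ≤ Real.arccos 0.3 := arccos_anti (by norm_num) hy1 h.le
      calc y * Real.arccos y ≤ 0.5 * 1.27 := by
            apply mul_le_mul h2 (by linarith) hnn (by norm_num)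
        _ ≤ 0.7 := by norm_num
    rcases le_or_gt y 0.65 with h3 | h3
    · have ha : Real.arccos y ≤ Real.arccos 0.5 := arccos_anti (by norm_num) hy1 h2.le
      calc y * Real.arccos y ≤ 0.65 * 1.05 := by
            apply mul_le_mul h3 (by linarith) hnn (by norm_num)
        _ ≤ 0.7 := by norm_num
    rcases le_or_gt y 0.8 with h4 | h4
    · have ha : Real.arccos y ≤ Real.arccos 0.65 := arccos_anti (by norm_num) hy1 h3.le
      calc y * Real.arccos y ≤ 0.8 * 0.87 := by
            apply mul_le_mul h4 (by linarith) hnn (by norm_num)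
        _ ≤ 0.7 := by norm_num
    · have ha : Real.arccos y ≤ Real.arccos 0.8 := arccos_anti (by norm_num) hy1 h4.le
      calc y * Real.arccos y ≤ 1 * 0.65 := by
            apply mul_le_mul hy1 (by linarith) hnn (by norm_num)
        _ ≤ 0.7 := by norm_num
  have : (0.7 : ℝ) < 0.2727 * (Real.arccos 0.2727 - Real.arccos 0.5758 +
      Real.arccos (0.2727 + 0.5758)) + 0.5758 * Real.arccos 0.5758 := by
    nlinarith
  linarith
end
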